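/- Let G be a finite group, H ≤ G a subgroup, and φ: H → {±1} a nontrivial homomorphism. For the monomial G-lattice M = Z_φ induced from H to G, one has H^1(G,M) ≅ Z/2Z and Ш¹(G,M) = 0. More generally, for a direct sum of such induced lattices, H^1(G,M) ≅ (Z/2Z)^m with m the number of nontrivial characters occurring, and Ш¹(G,M) = 0 and Ш²(G,M) = 0. -/

import Mathlib

open Function

section Core
variable (G : Type) [Group G]

/-- A map is `G`-equivariant. -/
def IsEquivMapP {M N : Type} [AddCommGroup M] [AddCommGroup N]
    [DistribMulAction G M] [DistribMulAction G N] (f : M → N) : Prop :=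
  ∀ (g : G) (m : M), f (g • m) = g • f m

/-- `M` is a permutation `G`-lattice: it has a finite `ℤ`-basis permuted by `G`. -/
def IsPermLat (M : Type) [AddCommGroup M] [DistribMulAction G M] : Prop :=
  ∃ (ι : Type) (_ : Fintype ι) (b : Module.Basis ι ℤ M) (σ : G → ι → ι),
    ∀ (g : G) (i : ι), g • (b i : M) = b (σ g i)

/-- `M` is a lattice: finitely generated and free over `ℤ`. -/
def IsLat (M : Type) [AddCommGroup M] : Prop := Module.Free ℤ M ∧ Module.Finite ℤ M

/-- A short exact sequence `0 → M → E → P → 0` of `G`-modules. -/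
def ShortExactG (M E P : Type) [AddCommGroup M] [AddCommGroup E] [AddCommGroup P]
    [DistribMulAction G M] [DistribMulAction G E] [DistribMulAction G P] : Prop :=
  ∃ (i : M →+ E) (p : E →+ P), IsEquivMapP G i ∧ IsEquivMapP G p ∧
    Injective i ∧ Surjective p ∧ i.range = p.ker

/-- Colliot-Thélène–Sansuc equivalence of `G`-lattices. -/
def LatEquiv (M N : Type) [AddCommGroup M] [AddCommGroup N]
    [DistribMulAction G M] [DistribMulAction G N] : Prop :=
  ∃ (E : Type) (_ : AddCommGroup E) (_ : DistribMulAction G E)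
    (P : Type) (_ : AddCommGroup P) (_ : DistribMulAction G P)
    (Q : Type) (_ : AddCommGroup Q) (_ : DistribMulAction G Q),
    IsLat E ∧ IsPermLat G P ∧ IsPermLat G Q ∧
    ShortExactG G M E P ∧ ShortExactG G N E Q

/-- `M` is stably permutation. -/
def IsStablyPerm (M : Type) [AddCommGroup M] [DistribMulAction G M] : Prop :=
  ∃ (P : Type) (_ : AddCommGroup P) (_ : DistribMulAction G P)
    (Q : Type) (_ : AddCommGroup Q) (_ : DistribMulAction G Q),
    IsPermLat G P ∧ IsPermLat G Q ∧
    ∃ e : (M × P) ≃+ Q, IsEquivMapP G e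

/-- `M` is permutation projective: a direct summand of a permutation lattice. -/
def IsPermProj (M : Type) [AddCommGroup M] [DistribMulAction G M] : Prop :=
  ∃ (P : Type) (_ : AddCommGroup P) (_ : DistribMulAction G P), IsPermLat G P ∧
    ∃ (i : M →+ P) (r : P →+ M), IsEquivMapP G i ∧ IsEquivMapP G r ∧ ∀ m, r (i m) = m

/-- `M` is quasi-permutation: it embeds into a permutation lattice with permutation quotient. -/
def IsQuasiPerm (M : Type) [AddCommGroup M] [DistribMulAction G M] : Prop :=
  ∃ (P : Type) (_ : AddCommGroup P) (_ : DistribMulAction G P)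
    (Q : Type) (_ : AddCommGroup Q) (_ : DistribMulAction G Q),
    IsPermLat G P ∧ IsPermLat G Q ∧ ShortExactG G M P Q

variable (M : Type) [AddCommGroup M] [DistribMulAction G M]

/-- 1-cocycles. -/
def Z1 : AddSubgroup (G → M) where
  carrier := {f | ∀ g h : G, f (g * h) = g • f h + f g}
  zero_mem' := by intro g h; simp
  add_mem' := by
    intro f f' hf hf' g h
    simp only [Pi.add_apply, hf g h, hf' g h, smul_add]; abel
  neg_mem' := by
    intro f hf g h
    simp only [Pi.neg_apply, hf g h, smul_neg]; abel

/-- The coboundary homomorphism. -/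
def coboundHom : M →+ Z1 G M where
  toFun m := ⟨fun g => g • m - m, by intro g h; simp only [mul_smul, smul_sub]; abel⟩
  map_zero' := by apply Subtype.ext; funext g; simp
  map_add' := by
    intro a b; apply Subtype.ext; funext g
    show g • (a + b) - (a + b) = (g • a - a) + (g • b - b)
    simp only [smul_add]; abel

/-- 1-coboundaries. -/
def B1 : AddSubgroup (Z1 G M) := (coboundHom G M).range

/-- First group cohomology `H¹(G, M)`. -/
abbrev H1 := Z1 G M ⧸ B1 G M

/-- Restriction of cocycles to a subgroup. -/
def resZ1 (H : Subgroup G) : Z1 G M →+ Z1 H M where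
  toFun f := ⟨fun h => f.1 h, by
    intro a b
    have := f.2 (a : G) (b : G)
    simpa [Subgroup.smul_def] using this⟩
  map_zero' := rfl
  map_add' := fun _ _ => rfl

/-- Restriction on `H¹`. -/
def resH1 (H : Subgroup G) : H1 G M →+ H1 H M :=
  QuotientAddGroup.map _ _ (resZ1 G M H) (by
    rintro _ ⟨m, rfl⟩
    exact ⟨m, Subtype.ext rfl⟩)

/-- `Ш¹(G, M)`. -/
def Sha1 : AddSubgroup (H1 G M) :=
  ⨅ g : G, (resH1 G M (Subgroup.zpowers g)).ker

/-- `M` is coflasque: `H¹(H, M) = 0` for all subgroups `H ≤ G`. -/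
def IsCoflasque : Prop := ∀ H : Subgroup G, ∀ x y : H1 H M, x = y

end Core

section Core2
variable (G : Type) [Group G] (M : Type) [AddCommGroup M] [DistribMulAction G M]

/-- 2-cocycles. -/
def Z2 : AddSubgroup (G → G → M) where
  carrier := {f | ∀ g h k : G, g • f h k - f (g * h) k + f g (h * k) - f g h = 0}
  zero_mem' := by intro g h k; simp
  add_mem' := by
    intro f f' hf hf' g h k
    have h1 := hf g h k; have h2 := hf' g h k
    simp only [Pi.add_apply, smul_add]
    calc g • f h k + g • f' h k - (f (g * h) k + f' (g * h) k) +
          (f g (h * k) + f' g (h * k)) - (f g h + f' g h)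
        = (g • f h k - f (g * h) k + f g (h * k) - f g h) +
          (g • f' h k - f' (g * h) k + f' g (h * k) - f' g h) := by abel
      _ = 0 := by rw [h1, h2, add_zero]
  neg_mem' := by
    intro f hf g h k
    have h1 := hf g h k
    simp only [Pi.neg_apply, smul_neg]
    calc -(g • f h k) - -f (g * h) k + -f g (h * k) - -f g h
        = -(g • f h k - f (g * h) k + f g (h * k) - f g h) := by abel
      _ = 0 := by rw [h1, neg_zero]

/-- The 2-coboundary homomorphism. -/
def cobound2Hom : (G → M) →+ Z2 G M where
  toFun u := ⟨fun g h => g • u h - u (g * h) + u g, by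
    intro g h k
    simp only [mul_smul, smul_sub, smul_add, mul_assoc]
    abel⟩
  map_zero' := by apply Subtype.ext; funext g h; simp
  map_add' := by
    intro a b; apply Subtype.ext; funext g h
    show g • (a h + b h) - (a (g * h) + b (g * h)) + (a g + b g)
        = (g • a h - a (g * h) + a g) + (g • b h - b (g * h) + b g)
    simp only [smul_add]; abel

/-- 2-coboundaries. -/
def B2 : AddSubgroup (Z2 G M) := (cobound2Hom G M).range

/-- Second group cohomology `H²(G, M)`. -/
abbrev H2 := Z2 G M ⧸ B2 G M

/-- Restriction of 2-cocycles to a subgroup. -/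
def resZ2 (H : Subgroup G) : Z2 G M →+ Z2 H M where
  toFun f := ⟨fun a b => f.1 a b, by
    intro a b c
    have := f.2 (a : G) (b : G) (c : G)
    simpa [Subgroup.smul_def] using this⟩
  map_zero' := rfl
  map_add' := fun _ _ => rfl

/-- Restriction on `H²`. -/
def resH2 (H : Subgroup G) : H2 G M →+ H2 H M :=
  QuotientAddGroup.map _ _ (resZ2 G M H) (by
    rintro _ ⟨u, rfl⟩
    exact ⟨fun h : H => u (h : G), Subtype.ext rfl⟩)

/-- `Ш²(G, M)`. -/
def Sha2 : AddSubgroup (H2 G M) :=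
  ⨅ g : G, (resH2 G M (Subgroup.zpowers g)).ker

/-- The subgroup `2M`. -/
def twoSub : AddSubgroup M :=
  (AddMonoidHom.mk' (fun m : M => (2 : ℤ) • m) (by
    intro a b
    show (2 : ℤ) • (a + b) = (2 : ℤ) • a + (2 : ℤ) • b
    rw [smul_add])).range

/-- `M/2M`. -/
abbrev ModTwo := M ⧸ twoSub M

noncomputable instance : SMul G (ModTwo M) :=
  ⟨fun g => QuotientAddGroup.map _ _ (DistribMulAction.toAddMonoidHom M g) (by
    rintro _ ⟨m, rfl⟩
    refine ⟨g • m, ?_⟩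
    show (2 : ℤ) • (g • m) = g • ((2 : ℤ) • m)
    rw [smul_comm])⟩

theorem modTwo_smul_mk (g : G) (m : M) :
    g • (QuotientAddGroup.mk m : ModTwo M) = QuotientAddGroup.mk (g • m) := rfl

noncomputable instance : DistribMulAction G (ModTwo M) where
  one_smul x := by
    obtain ⟨m, rfl⟩ := QuotientAddGroup.mk_surjective x
    rw [modTwo_smul_mk, one_smul]
  mul_smul g h x := by
    obtain ⟨m, rfl⟩ := QuotientAddGroup.mk_surjective x
    rw [modTwo_smul_mk, modTwo_smul_mk, modTwo_smul_mk, mul_smul]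
  smul_zero g := map_zero (QuotientAddGroup.map _ _ (DistribMulAction.toAddMonoidHom M g) _)
  smul_add g x y := map_add (QuotientAddGroup.map _ _ (DistribMulAction.toAddMonoidHom M g) _) x y

variable [Finite G]

/-- Kernel of the norm map (for a finite group). -/
def normKer : AddSubgroup M where
  carrier := {x | ∑ᶠ g : G, g • x = 0}
  zero_mem' := by simp
  add_mem' := by
    intro x y hx hy
    have hx' : ∑ᶠ g : G, g • x = 0 := hx
    have hy' : ∑ᶠ g : G, g • y = 0 := hy
    show ∑ᶠ g : G, g • (x + y) = 0
    simp only [smul_add]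
    rw [finsum_add_distrib (Set.toFinite _) (Set.toFinite _), hx', hy', add_zero]
  neg_mem' := by
    intro x hx
    have hx' : ∑ᶠ g : G, g • x = 0 := hx
    show ∑ᶠ g : G, g • (-x) = 0
    simp only [smul_neg]
    rw [finsum_neg_distrib, hx', neg_zero]

/-- The subgroup generated by elements `g • m - m`. -/
def augSub : AddSubgroup M := AddSubgroup.closure {x | ∃ (g : G) (m : M), x = g • m - m}

/-- Tate cohomology `Ĥ⁻¹(G, M)` (for a finite group `G`). -/
abbrev TateNeg1 := normKer G M ⧸ ((augSub G M).addSubgroupOf (normKer G M))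

/-- `M` is flasque: `Ĥ⁻¹(H, M) = 0` for all subgroups `H ≤ G`. -/
def IsFlasque : Prop := ∀ H : Subgroup G, ∀ x y : TateNeg1 H M, x = y

end Core2

section Core3
variable (G : Type) [Group G]

/-- `M` is equivalent to a direct summand of a quasi-permutation `G`-lattice. -/
def IsEquivSummandQP (M : Type) [AddCommGroup M] [DistribMulAction G M] : Prop :=
  ∃ (S : Type) (_ : AddCommGroup S) (_ : DistribMulAction G S)
    (D : Type) (_ : AddCommGroup D) (_ : DistribMulAction G D)
    (D' : Type) (_ : AddCommGroup D') (_ : DistribMulAction G D'),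
    IsLat S ∧ IsQuasiPerm G S ∧ (∃ e : (D × D') ≃+ S, IsEquivMapP G e) ∧
    LatEquiv G M D

end Core3

section Tensor
open TensorProduct
variable (G : Type) [Group G] (M : Type) [AddCommGroup M] [DistribMulAction G M]

/-- The action of `g : G` as a `ℤ`-linear map. -/
def gLin (g : G) : M →ₗ[ℤ] M := (DistribMulAction.toAddMonoidHom M g).toIntLinearMap

noncomputable instance tensorSMul : SMul G (M ⊗[ℤ] M) :=
  ⟨fun g => TensorProduct.map (gLin G M g) (gLin G M g)⟩

theorem tsmul_def (g : G) (x : M ⊗[ℤ] M) :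
    g • x = TensorProduct.map (gLin G M g) (gLin G M g) x := rfl

theorem gLin_one : gLin G M 1 = LinearMap.id := by
  ext m; show (1 : G) • m = m; rw [one_smul]

theorem gLin_mul (g h : G) : gLin G M (g * h) = (gLin G M g).comp (gLin G M h) := by
  ext m; show (g * h) • m = g • h • m; rw [mul_smul]

noncomputable instance tensorAct : DistribMulAction G (M ⊗[ℤ] M) where
  one_smul x := by rw [tsmul_def, gLin_one, TensorProduct.map_id]; rfl
  mul_smul g h x := by
    rw [tsmul_def, tsmul_def, tsmul_def, gLin_mul, TensorProduct.map_comp]; rfl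
  smul_zero g := map_zero _
  smul_add g x y := map_add _ x y

/-- Generators of the symmetric relation. -/
def symSpan : @Submodule ℤ (M ⊗[ℤ] M) _ _ TensorProduct.instModule :=
  Submodule.span ℤ {x | ∃ a b : M, x = a ⊗ₜ[ℤ] b - b ⊗ₜ[ℤ] a}

/-- Generators of the wedge relation. -/
def wedSpan : @Submodule ℤ (M ⊗[ℤ] M) _ _ TensorProduct.instModule :=
  Submodule.span ℤ {x | ∃ a : M, x = a ⊗ₜ[ℤ] a}

/-- The second symmetric power `Sym²M`. -/
abbrev Sym2Q := (M ⊗[ℤ] M) ⧸ symSpan M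

/-- The second exterior power `∧²M`. -/
abbrev Wedge2Q := (M ⊗[ℤ] M) ⧸ wedSpan M

theorem symSpan_le_comap (g : G) :
    symSpan M ≤ (symSpan M).comap (TensorProduct.map (gLin G M g) (gLin G M g)) := by
  rw [← Submodule.map_le_iff_le_comap, symSpan, Submodule.map_span]
  refine Submodule.span_le.2 ?_
  rintro _ ⟨_, ⟨a, b, rfl⟩, rfl⟩
  refine Submodule.subset_span ?_
  exact ⟨g • a, g • b, by simp [TensorProduct.map_tmul]; rfl⟩

theorem wedSpan_le_comap (g : G) :
    wedSpan M ≤ (wedSpan M).comap (TensorProduct.map (gLin G M g) (gLin G M g)) := by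
  rw [← Submodule.map_le_iff_le_comap, wedSpan, Submodule.map_span]
  refine Submodule.span_le.2 ?_
  rintro _ ⟨_, ⟨a, rfl⟩, rfl⟩
  exact Submodule.subset_span ⟨g • a, by simp [TensorProduct.map_tmul]; rfl⟩

noncomputable instance sym2SMul : SMul G (Sym2Q M) :=
  ⟨fun g => Submodule.mapQ _ _ (TensorProduct.map (gLin G M g) (gLin G M g))
    (symSpan_le_comap G M g)⟩

noncomputable instance wedge2SMul : SMul G (Wedge2Q M) :=
  ⟨fun g => Submodule.mapQ _ _ (TensorProduct.map (gLin G M g) (gLin G M g))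
    (wedSpan_le_comap G M g)⟩

theorem sym2_smul_mk (g : G) (x : M ⊗[ℤ] M) :
    g • ((symSpan M).mkQ x) = (symSpan M).mkQ (g • x) :=
  Submodule.mapQ_apply _ _ _ _

theorem wedge2_smul_mk (g : G) (x : M ⊗[ℤ] M) :
    g • ((wedSpan M).mkQ x) = (wedSpan M).mkQ (g • x) :=
  Submodule.mapQ_apply _ _ _ _

noncomputable instance sym2Act : DistribMulAction G (Sym2Q M) where
  one_smul x := by
    obtain ⟨y, rfl⟩ := (symSpan M).mkQ_surjective x
    rw [sym2_smul_mk, one_smul]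
  mul_smul g h x := by
    obtain ⟨y, rfl⟩ := (symSpan M).mkQ_surjective x
    rw [sym2_smul_mk, sym2_smul_mk, sym2_smul_mk, mul_smul]
  smul_zero g := map_zero (Submodule.mapQ _ _ _ (symSpan_le_comap G M g))
  smul_add g x y := map_add (Submodule.mapQ _ _ _ (symSpan_le_comap G M g)) x y

noncomputable instance wedge2Act : DistribMulAction G (Wedge2Q M) where
  one_smul x := by
    obtain ⟨y, rfl⟩ := (wedSpan M).mkQ_surjective x
    rw [wedge2_smul_mk, one_smul]
  mul_smul g h x := by
    obtain ⟨y, rfl⟩ := (wedSpan M).mkQ_surjective x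
    rw [wedge2_smul_mk, wedge2_smul_mk, wedge2_smul_mk, mul_smul]
  smul_zero g := map_zero (Submodule.mapQ _ _ _ (wedSpan_le_comap G M g))
  smul_add g x y := map_add (Submodule.mapQ _ _ _ (wedSpan_le_comap G M g)) x y

variable {M} {N : Type} [AddCommGroup N]

/-- The map `Sym²f` induced by a linear map `f`. -/
noncomputable def sym2Map (f : M →ₗ[ℤ] N) : Sym2Q M →ₗ[ℤ] Sym2Q N :=
  Submodule.mapQ _ _ (TensorProduct.map f f) (by
    rw [← Submodule.map_le_iff_le_comap, symSpan, Submodule.map_span]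
    refine Submodule.span_le.2 ?_
    rintro _ ⟨_, ⟨a, b, rfl⟩, rfl⟩
    exact Submodule.subset_span ⟨f a, f b, by simp [TensorProduct.map_tmul]⟩)

/-- The map `∧²f` induced by a linear map `f`. -/
noncomputable def wedge2Map (f : M →ₗ[ℤ] N) : Wedge2Q M →ₗ[ℤ] Wedge2Q N :=
  Submodule.mapQ _ _ (TensorProduct.map f f) (by
    rw [← Submodule.map_le_iff_le_comap, wedSpan, Submodule.map_span]
    refine Submodule.span_le.2 ?_
    rintro _ ⟨_, ⟨a, rfl⟩, rfl⟩
    exact Submodule.subset_span ⟨f a, by simp [TensorProduct.map_tmul]⟩)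

end Tensor

section PermMod
variable (G : Type) [Group G] (X : Type) [MulAction G X]

/-- The permutation action on `ℤ[X] = X → ℤ`. -/
instance permSMul : SMul G (X → ℤ) := ⟨fun g f x => f (g⁻¹ • x)⟩

theorem perm_smul_def (g : G) (f : X → ℤ) (x : X) : (g • f) x = f (g⁻¹ • x) := rfl

instance permAct : DistribMulAction G (X → ℤ) where
  one_smul f := funext fun x => by rw [perm_smul_def, inv_one, one_smul]
  mul_smul g h f := funext fun x => by
    rw [perm_smul_def, perm_smul_def, perm_smul_def, mul_inv_rev, mul_smul]
  smul_zero g := rfl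
  smul_add g f f' := rfl

variable [Fintype X]

/-- The augmentation kernel `A = ker(ℤ[X] → ℤ)`. -/
def augKer : AddSubgroup (X → ℤ) where
  carrier := {f | ∑ x, f x = 0}
  zero_mem' := by simp
  add_mem' := by
    intro a b ha hb
    have ha' : ∑ x, a x = 0 := ha
    have hb' : ∑ x, b x = 0 := hb
    show ∑ x, (a x + b x) = 0
    rw [Finset.sum_add_distrib, ha', hb', add_zero]
  neg_mem' := by
    intro a ha
    have ha' : ∑ x, a x = 0 := ha
    show ∑ x, (-(a x)) = 0
    rw [Finset.sum_neg_distrib, ha', neg_zero]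

theorem smul_mem_augKer (g : G) (f : X → ℤ) (hf : f ∈ augKer X) :
    g • f ∈ augKer X := by
  have hf' : ∑ x, f x = 0 := hf
  show ∑ x, f (g⁻¹ • x) = 0
  exact (Equiv.sum_comp (MulAction.toPerm (g⁻¹ : G)) f).trans hf'

instance augKerSMul : SMul G (augKer X) :=
  ⟨fun g f => ⟨g • (f : X → ℤ), smul_mem_augKer G X g f f.2⟩⟩

theorem augKer_smul_def (g : G) (f : augKer X) :
    ((g • f : augKer X) : X → ℤ) = g • (f : X → ℤ) := rfl

instance augKerAct : DistribMulAction G (augKer X) where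
  one_smul f := Subtype.ext (by rw [augKer_smul_def, one_smul])
  mul_smul g h f := Subtype.ext (by
    rw [augKer_smul_def, augKer_smul_def, augKer_smul_def, mul_smul])
  smul_zero g := Subtype.ext (by
    rw [augKer_smul_def]
    show g • (0 : X → ℤ) = 0
    rw [smul_zero])
  smul_add g f f' := Subtype.ext (by
    show g • ((f : X → ℤ) + f') = g • (f : X → ℤ) + g • (f' : X → ℤ)
    rw [smul_add])

end PermMod

section P2sec
variable (G : Type) [Group G]

/-- The set of 2-element subsets of `X`. -/
def P2 (X : Type) [DecidableEq X] : Type := {s : Finset X // s.card = 2}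

noncomputable instance (X : Type) [DecidableEq X] [Fintype X] : Fintype (P2 X) := by
  unfold P2; infer_instance

instance p2SMul (X : Type) [DecidableEq X] [MulAction G X] : SMul G (P2 X) :=
  ⟨fun g s => ⟨s.1.image (fun x => g • x), by
    rw [Finset.card_image_of_injective _ (MulAction.injective g)]; exact s.2⟩⟩

theorem p2_smul_def (X : Type) [DecidableEq X] [MulAction G X] (g : G) (s : P2 X) :
    (g • s).1 = s.1.image (fun x => g • x) := rfl

instance p2Act (X : Type) [DecidableEq X] [MulAction G X] : MulAction G (P2 X) where
  one_smul s := Subtype.ext (by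
    rw [p2_smul_def]
    simp)
  mul_smul g h s := Subtype.ext (by
    simp only [p2_smul_def, Finset.image_image]
    refine Finset.image_congr ?_
    intro x _
    exact mul_smul g h x)

end P2sec

/-- The root lattice `A_{n-1}` as an `S_n`-lattice. -/
abbrev rootLat (n : ℕ) := augKer (Fin n)


/-- The monomial lattice `ℤ_φ` induced from `H` to `G`. -/
def indSign (G : Type) [Group G] (H : Subgroup G) (φ : H →* ℤˣ) : AddSubgroup (G → ℤ) where
  carrier := {f | ∀ (g : G) (h : H), f (g * h) = (φ h : ℤ) * f g}
  zero_mem' := by intro g h; simp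
  add_mem' := by
    intro a b ha hb g h
    show a (g * h) + b (g * h) = (φ h : ℤ) * (a g + b g)
    rw [ha g h, hb g h]; ring
  neg_mem' := by
    intro a ha g h
    show -(a (g * h)) = (φ h : ℤ) * (-(a g))
    rw [ha g h]; ring

instance indSignSMul (G : Type) [Group G] (H : Subgroup G) (φ : H →* ℤˣ) :
    SMul G (indSign G H φ) :=
  ⟨fun σ f => ⟨fun g => (f : G → ℤ) (σ⁻¹ * g), by
    intro g h
    show (f : G → ℤ) (σ⁻¹ * (g * h)) = (φ h : ℤ) * (f : G → ℤ) (σ⁻¹ * g)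
    rw [← mul_assoc]
    exact f.2 (σ⁻¹ * g) h⟩⟩

theorem indSign_smul_def (G : Type) [Group G] (H : Subgroup G) (φ : H →* ℤˣ)
    (σ : G) (f : indSign G H φ) (g : G) :
    ((σ • f : indSign G H φ) : G → ℤ) g = (f : G → ℤ) (σ⁻¹ * g) := rfl

instance indSignAct (G : Type) [Group G] (H : Subgroup G) (φ : H →* ℤˣ) :
    DistribMulAction G (indSign G H φ) where
  one_smul f := Subtype.ext (funext fun g => by
    rw [indSign_smul_def, inv_one, one_mul])
  mul_smul σ τ f := Subtype.ext (funext fun g => by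
    simp only [indSign_smul_def, mul_inv_rev, mul_assoc])
  smul_zero σ := Subtype.ext rfl
  smul_add σ f f' := Subtype.ext rfl

section Plumbing
variable (G : Type) [Group G]
variable {M N : Type} [AddCommGroup M] [AddCommGroup N]
  [DistribMulAction G M] [DistribMulAction G N]

/-- Map on 1-cocycles induced by an equivariant hom. -/
def mapZ1 (α : M →+ N) (hα : ∀ (g : G) (m : M), α (g • m) = g • α m) :
    Z1 G M →+ Z1 G N where
  toFun f := ⟨fun g => α (f.1 g), by
    intro g h
    have := f.2 g h
    simp only [this, map_add, hα]⟩
  map_zero' := by apply Subtype.ext; funext g; simp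
  map_add' f f' := by
    apply Subtype.ext; funext g
    show α ((f + f').1 g) = α (f.1 g) + α (f'.1 g)
    have : (f + f').1 g = f.1 g + f'.1 g := rfl
    rw [this, map_add]

theorem mapZ1_apply (α : M →+ N) (hα) (f : Z1 G M) (g : G) :
    (mapZ1 G α hα f).1 g = α (f.1 g) := rfl

/-- Map on `H¹` induced by an equivariant hom. -/
def mapH1 (α : M →+ N) (hα : ∀ (g : G) (m : M), α (g • m) = g • α m) :
    H1 G M →+ H1 G N :=
  QuotientAddGroup.map _ _ (mapZ1 G α hα) (by
    rintro _ ⟨m, rfl⟩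
    refine ⟨α m, ?_⟩
    apply Subtype.ext; funext g
    show (g • (α m) - α m) = α (g • m - m)
    rw [map_sub, hα])

theorem mapH1_mk (α : M →+ N) (hα) (f : Z1 G M) :
    mapH1 G α hα (QuotientAddGroup.mk f) = QuotientAddGroup.mk (mapZ1 G α hα f) := rfl

theorem subgroup_smul_def (K : Subgroup G) (k : K) (m : M) : k • m = (k : G) • m := rfl

theorem resH1_mapH1 (α : M →+ N) (hα) (K : Subgroup G) (x : H1 G M) :
    resH1 G N K (mapH1 G α hα x) =
      mapH1 K α (fun k m => hα (k : G) m) (resH1 G M K x) := by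
  induction x using QuotientAddGroup.induction_on with
  | H f => rfl

theorem sha1_map (α : M →+ N) (hα) (x : H1 G M) (hx : x ∈ Sha1 G M) :
    mapH1 G α hα x ∈ Sha1 G N := by
  rw [Sha1, AddSubgroup.mem_iInf] at hx ⊢
  intro g
  simp only [AddMonoidHom.mem_ker] at hx ⊢
  rw [resH1_mapH1, hx g, map_zero]

/-- Map on 2-cocycles induced by an equivariant hom. -/
def mapZ2 (α : M →+ N) (hα : ∀ (g : G) (m : M), α (g • m) = g • α m) :
    Z2 G M →+ Z2 G N where
  toFun f := ⟨fun g h => α (f.1 g h), by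
    intro g h k
    have := congrArg α (f.2 g h k)
    simp only [map_sub, map_add, map_zero, hα] at this
    exact this⟩
  map_zero' := by apply Subtype.ext; funext g h; simp
  map_add' f f' := by
    apply Subtype.ext; funext g h
    show α ((f + f').1 g h) = α (f.1 g h) + α (f'.1 g h)
    have : (f + f').1 g h = f.1 g h + f'.1 g h := rfl
    rw [this, map_add]

/-- Map on `H²` induced by an equivariant hom. -/
def mapH2 (α : M →+ N) (hα : ∀ (g : G) (m : M), α (g • m) = g • α m) :
    H2 G M →+ H2 G N :=
  QuotientAddGroup.map _ _ (mapZ2 G α hα) (by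
    rintro _ ⟨u, rfl⟩
    refine ⟨fun g => α (u g), ?_⟩
    apply Subtype.ext; funext g h
    show (g • (α (u h)) - α (u (g * h)) + α (u g)) = α (g • u h - u (g * h) + u g)
    rw [map_add, map_sub, hα])

theorem mapH2_mk (α : M →+ N) (hα) (f : Z2 G M) :
    mapH2 G α hα (QuotientAddGroup.mk f) = QuotientAddGroup.mk (mapZ2 G α hα f) := rfl

theorem resH2_mapH2 (α : M →+ N) (hα) (K : Subgroup G) (x : H2 G M) :
    resH2 G N K (mapH2 G α hα x) =
      mapH2 K α (fun k m => hα (k : G) m) (resH2 G M K x) := by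
  induction x using QuotientAddGroup.induction_on with
  | H f => rfl

theorem sha2_map (α : M →+ N) (hα) (x : H2 G M) (hx : x ∈ Sha2 G M) :
    mapH2 G α hα x ∈ Sha2 G N := by
  rw [Sha2, AddSubgroup.mem_iInf] at hx ⊢
  intro g
  simp only [AddMonoidHom.mem_ker] at hx ⊢
  rw [resH2_mapH2, hx g, map_zero]

/-- `H¹` equivalence from an equivariant additive equivalence. -/
noncomputable def h1Equiv (e : M ≃+ N) (he : ∀ (g : G) (m : M), e (g • m) = g • e m) :
    H1 G M ≃+ H1 G N := by
  have he' : ∀ (g : G) (n : N), e.symm (g • n) = g • e.symm n := by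
    intro g n
    apply e.injective
    rw [he, e.apply_symm_apply, e.apply_symm_apply]
  refine AddEquiv.mk' ⟨mapH1 G e.toAddMonoidHom he, mapH1 G e.symm.toAddMonoidHom he', ?_, ?_⟩
    (fun x y => map_add (mapH1 G e.toAddMonoidHom he) x y)
  · intro x
    induction x using QuotientAddGroup.induction_on with
    | H f =>
      show mapH1 G _ he' (QuotientAddGroup.mk (mapZ1 G _ he f)) = _
      show QuotientAddGroup.mk (mapZ1 G e.symm.toAddMonoidHom he' (mapZ1 G e.toAddMonoidHom he f)) = _
      congr 1
      apply Subtype.ext; funext g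
      show e.symm (e (f.1 g)) = f.1 g
      exact e.symm_apply_apply _
  · intro x
    induction x using QuotientAddGroup.induction_on with
    | H f =>
      show mapH1 G _ he (QuotientAddGroup.mk (mapZ1 G _ he' f)) = _
      show QuotientAddGroup.mk (mapZ1 G e.toAddMonoidHom he (mapZ1 G e.symm.toAddMonoidHom he' f)) = _
      congr 1
      apply Subtype.ext; funext g
      show e (e.symm (f.1 g)) = f.1 g
      exact e.apply_symm_apply _

theorem h1Equiv_apply (e : M ≃+ N) (he) (x : H1 G M) :
    h1Equiv G e he x = mapH1 G e.toAddMonoidHom he x := rfl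

end Plumbing
section PiPlumb
variable (G : Type) [Group G]
variable {ι : Type} {Mi : ι → Type} [∀ i, AddCommGroup (Mi i)]
  [∀ i, DistribMulAction G (Mi i)]

/-- Projection is equivariant. -/
theorem proj_equiv (i : ι) : ∀ (g : G) (m : ∀ j, Mi j),
    (Pi.evalAddMonoidHom Mi i) (g • m) = g • (Pi.evalAddMonoidHom Mi i) m :=
  fun _ _ => rfl

/-- The projection on `H¹`. -/
noncomputable def piProjH1 (i : ι) : H1 G (∀ j, Mi j) →+ H1 G (Mi i) :=
  mapH1 G (Pi.evalAddMonoidHom Mi i) (proj_equiv G i)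

theorem pi_B1 (f : Z1 G (∀ j, Mi j))
    (hf : ∀ i, mapZ1 G (Pi.evalAddMonoidHom Mi i) (proj_equiv G i) f ∈ B1 G (Mi i)) :
    f ∈ B1 G (∀ j, Mi j) := by
  choose m hm using hf
  refine ⟨fun i => m i, ?_⟩
  apply Subtype.ext; funext g; funext i
  have := congrArg (fun z => z.1 g) (hm i)
  show (g • (fun j => m j) - (fun j => m j)) i = f.1 g i
  calc (g • (fun j => m j) - (fun j => m j)) i = g • m i - m i := rfl
    _ = f.1 g i := this

theorem piProjH1_inj (x : H1 G (∀ j, Mi j)) (hx : ∀ i, piProjH1 G i x = 0) : x = 0 := by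
  induction x using QuotientAddGroup.induction_on with
  | H f =>
    rw [QuotientAddGroup.eq_zero_iff]
    refine pi_B1 G f (fun i => ?_)
    have := hx i
    rw [piProjH1, mapH1_mk, QuotientAddGroup.eq_zero_iff] at this
    exact this

theorem piProjH1_surj (y : ∀ i, H1 G (Mi i)) : ∃ x, ∀ i, piProjH1 G i x = y i := by
  have : ∀ i, ∃ f : Z1 G (Mi i), QuotientAddGroup.mk f = y i :=
    fun i => QuotientAddGroup.mk_surjective (y i)
  choose f hf using this
  refine ⟨QuotientAddGroup.mk ⟨fun g i => (f i).1 g, ?_⟩, ?_⟩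
  · intro g h
    funext i
    have := (f i).2 g h
    calc (fun i => (f i).1 (g * h)) i = (f i).1 (g * h) := rfl
      _ = g • (f i).1 h + (f i).1 g := this
      _ = (g • (fun j => (f j).1 h) + fun j => (f j).1 g) i := rfl
  · intro i
    rw [piProjH1, mapH1_mk, ← hf i]
    congr 1

/-- The projection on `H²`. -/
noncomputable def piProjH2 (i : ι) : H2 G (∀ j, Mi j) →+ H2 G (Mi i) :=
  mapH2 G (Pi.evalAddMonoidHom Mi i) (proj_equiv G i)

theorem pi_B2 (f : Z2 G (∀ j, Mi j))
    (hf : ∀ i, mapZ2 G (Pi.evalAddMonoidHom Mi i) (proj_equiv G i) f ∈ B2 G (Mi i)) :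
    f ∈ B2 G (∀ j, Mi j) := by
  choose m hm using hf
  refine ⟨fun g i => m i g, ?_⟩
  apply Subtype.ext; funext g; funext h; funext i
  have := congrArg (fun z => z.1 g h) (hm i)
  show (g • (fun j => m j h) - (fun j => m j (g * h)) + fun j => m j g) i = f.1 g h i
  calc (g • (fun j => m j h) - (fun j => m j (g * h)) + fun j => m j g) i
      = g • m i h - m i (g * h) + m i g := rfl
    _ = f.1 g h i := this

theorem piProjH2_inj (x : H2 G (∀ j, Mi j)) (hx : ∀ i, piProjH2 G i x = 0) : x = 0 := by
  induction x using QuotientAddGroup.induction_on with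
  | H f =>
    rw [QuotientAddGroup.eq_zero_iff]
    refine pi_B2 G f (fun i => ?_)
    have := hx i
    rw [piProjH2, mapH2_mk, QuotientAddGroup.eq_zero_iff] at this
    exact this

end PiPlumb
section IndMod
variable (G : Type) [Group G] (H : Subgroup G) (φ : H →* ℤˣ)
variable (A : Type) [AddCommGroup A]

/-- The monomial module with coefficients in `A`. -/
def IndM : AddSubgroup (G → A) where
  carrier := {f | ∀ (g : G) (h : H), f (g * h) = (φ h : ℤ) • f g}
  zero_mem' := by intro g h; simp
  add_mem' := by
    intro a b ha hb g h
    show a (g * h) + b (g * h) = (φ h : ℤ) • (a g + b g)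
    rw [ha g h, hb g h, smul_add]
  neg_mem' := by
    intro a ha g h
    show -(a (g * h)) = (φ h : ℤ) • (-(a g))
    rw [ha g h, smul_neg]

instance indMSMul : SMul G (IndM G H φ A) :=
  ⟨fun σ f => ⟨fun g => (f : G → A) (σ⁻¹ * g), by
    intro g h
    show (f : G → A) (σ⁻¹ * (g * h)) = (φ h : ℤ) • (f : G → A) (σ⁻¹ * g)
    rw [← mul_assoc]
    exact f.2 (σ⁻¹ * g) h⟩⟩

theorem indM_smul_def (σ : G) (f : IndM G H φ A) (g : G) :
    ((σ • f : IndM G H φ A) : G → A) g = (f : G → A) (σ⁻¹ * g) := rfl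

instance indMAct : DistribMulAction G (IndM G H φ A) where
  one_smul f := Subtype.ext (funext fun g => by
    rw [indM_smul_def, inv_one, one_mul])
  mul_smul σ τ f := Subtype.ext (funext fun g => by
    simp only [indM_smul_def, mul_inv_rev, mul_assoc])
  smul_zero σ := Subtype.ext rfl
  smul_add σ f f' := Subtype.ext rfl

/-- Bridge between `indSign` and `IndM ℤ`. -/
def bridge : indSign G H φ ≃+ IndM G H φ ℤ where
  toFun f := ⟨(f : G → ℤ), by intro g h; rw [f.2 g h, smul_eq_mul]⟩
  invFun f := ⟨(f : G → ℤ), by intro g h; rw [f.2 g h, smul_eq_mul]⟩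
  left_inv f := rfl
  right_inv f := rfl
  map_add' f f' := rfl

theorem bridge_equiv : ∀ (g : G) (m : indSign G H φ),
    bridge G H φ (g • m) = g • bridge G H φ m := fun _ _ => rfl

/-- Coset representative. -/
noncomputable def rsec (g : G) : G := (QuotientGroup.mk g : G ⧸ H).out

theorem rsec_spec (g : G) : (rsec G H g)⁻¹ * g ∈ H := by
  have : (QuotientGroup.mk (rsec G H g) : G ⧸ H) = QuotientGroup.mk g := by
    simp [rsec]
  exact (QuotientGroup.eq).1 this

theorem rsec_mul (g : G) (h : H) : rsec G H (g * h) = rsec G H g := by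
  unfold rsec
  congr 1
  exact (QuotientGroup.eq).2 (by simpa using (mul_mem (inv_mem h.2) h.2))

/-- The `H`-component of `g` relative to the transversal. -/
noncomputable def piH (g : G) : H := ⟨(rsec G H g)⁻¹ * g, rsec_spec G H g⟩

theorem rsec_piH (g : G) : rsec G H g * (piH G H g : G) = g := by
  simp [piH]

theorem piH_mul (g : G) (h : H) : piH G H (g * h) = piH G H g * h := by
  apply Subtype.ext
  show (rsec G H (g * h))⁻¹ * (g * h) = (rsec G H g)⁻¹ * g * h
  rw [rsec_mul, mul_assoc]

end IndMod
section KeyLemmas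
variable (G : Type) [Group G] (H : Subgroup G) (φ : H →* ℤˣ)
variable (A : Type) [AddCommGroup A]

theorem z1_one (f : Z1 G (IndM G H φ A)) : f.1 1 = 0 := by
  have := f.2 1 1
  rw [mul_one, one_smul] at this
  exact right_eq_add.mp this

theorem z1_inv (f : Z1 G (IndM G H φ A)) (σ : G) : f.1 σ⁻¹ = -(σ⁻¹ • f.1 σ) := by
  have := f.2 σ⁻¹ σ
  rw [inv_mul_cancel, z1_one] at this
  exact eq_neg_of_add_eq_zero_right this.symm

/-- The associated `H`-cochain. -/
def Ff (f : Z1 G (IndM G H φ A)) (h : H) : A := (f.1 (h : G)).1 1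

theorem units_int_inv (u : ℤˣ) : (u⁻¹ : ℤˣ) = u := Int.units_inv_eq_self u

theorem Ff_cocycle (f : Z1 G (IndM G H φ A)) (h h' : H) :
    Ff G H φ A f (h * h') = (φ h : ℤ) • Ff G H φ A f h' + Ff G H φ A f h := by
  unfold Ff
  have hc := f.2 (h : G) (h' : G)
  have : f.1 ((h : G) * (h' : G)) = (h : G) • f.1 (h' : G) + f.1 (h : G) := hc
  rw [Subgroup.coe_mul, this]
  show (f.1 (h' : G)).1 ((h : G)⁻¹ * 1) + (f.1 (h : G)).1 1 = _
  rw [mul_one]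
  congr 1
  have e2 := (f.1 (h' : G)).2 1 h⁻¹
  rw [one_mul] at e2
  show (f.1 (h' : G)).1 (((h⁻¹ : H) : G)) = _
  rw [e2, map_inv, units_int_inv]

theorem Ff_one (f : Z1 G (IndM G H φ A)) : Ff G H φ A f 1 = 0 := by
  unfold Ff
  rw [show ((1 : H) : G) = (1 : G) from rfl, z1_one]; rfl

theorem Ff_pow (f : Z1 G (IndM G H φ A)) (k : H) (hk : φ k = 1) (n : ℕ) :
    Ff G H φ A f (k ^ n) = n • Ff G H φ A f k := by
  induction n with
  | zero => simpa using Ff_one G H φ A f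
  | succ n ih =>
    rw [pow_succ, Ff_cocycle, map_pow, hk, ih, succ_nsmul]
    simp [add_comm]

/-- On `ker φ`, the `H`-cochain is torsion. -/
theorem Ff_ker_torsion (f : Z1 G (IndM G H φ A)) (k : H) (hk : φ k = 1) [Finite G] :
    (orderOf k) • Ff G H φ A f k = 0 := by
  have : Finite H := Subgroup.instFiniteSubtypeMem H
  have hord : k ^ (orderOf k) = 1 := pow_orderOf_eq_one k
  have := Ff_pow G H φ A f k hk (orderOf k)
  rw [hord, Ff_one] at this
  exact this.symm

theorem Ff_neg_eq (f : Z1 G (IndM G H φ A)) (hK : ∀ h : H, φ h = 1 → Ff G H φ A f h = 0)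
    (h0 h : H) (h0neg : φ h0 = -1) (hneg : φ h = -1) :
    Ff G H φ A f h = Ff G H φ A f h0 := by
  have : h = h0 * (h0⁻¹ * h) := by group
  rw [this, Ff_cocycle, hK _ (by rw [map_mul, map_inv, h0neg, hneg]; rfl)]
  simp

/-- Magic potential: a cocycle whose `H`-cochain vanishes is a coboundary. -/
theorem key_vanish (f : Z1 G (IndM G H φ A)) (hF : ∀ h : H, Ff G H φ A f h = 0) :
    f ∈ B1 G (IndM G H φ A) := by
  have hmem : (fun x => -((f.1 x).1 x)) ∈ IndM G H φ A := by
    intro x h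
    have hc : f.1 (x * h) = x • f.1 (h : G) + f.1 x := f.2 x (h : G)
    have e1 : (f.1 (x * h)).1 (x * h)
        = (f.1 (h : G)).1 (x⁻¹ * (x * h)) + (f.1 x).1 (x * h) := by rw [hc]; rfl
    have e2 : (f.1 (h : G)).1 (x⁻¹ * (x * (h : G))) = 0 := by
      rw [inv_mul_cancel_left]
      have e2a := (f.1 (h : G)).2 1 h
      rw [one_mul] at e2a
      rw [e2a, show ((f.1 (h : G)) : G → A) 1 = Ff G H φ A f h from rfl, hF h, smul_zero]
    have e3 : (f.1 x).1 (x * h) = (φ h : ℤ) • (f.1 x).1 x := (f.1 x).2 x h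
    show -((f.1 (x * h)).1 (x * h)) = (φ h : ℤ) • (-((f.1 x).1 x))
    rw [e1, e2, zero_add, e3, smul_neg]
  refine ⟨⟨fun x => -((f.1 x).1 x), hmem⟩, ?_⟩
  · apply Subtype.ext; funext σ
    apply Subtype.ext; funext x
    show (σ • (⟨fun x => -((f.1 x).1 x), hmem⟩ : IndM G H φ A)
        - ⟨fun x => -((f.1 x).1 x), hmem⟩).1 x = (f.1 σ).1 x
    have lhs : (σ • (⟨fun x => -((f.1 x).1 x), hmem⟩ : IndM G H φ A)
        - ⟨fun x => -((f.1 x).1 x), hmem⟩).1 x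
        = -((f.1 (σ⁻¹ * x)).1 (σ⁻¹ * x)) + (f.1 x).1 x := by
      show (fun y => -((f.1 y).1 y)) (σ⁻¹ * x) - (fun y => -((f.1 y).1 y)) x
          = -((f.1 (σ⁻¹ * x)).1 (σ⁻¹ * x)) + (f.1 x).1 x
      simp [sub_eq_add_neg]
    rw [lhs]
    have hc : f.1 (σ⁻¹ * x) = σ⁻¹ • f.1 x + f.1 σ⁻¹ := f.2 σ⁻¹ x
    have e1 : (f.1 (σ⁻¹ * x)).1 (σ⁻¹ * x)
        = (f.1 x).1 (σ⁻¹⁻¹ * (σ⁻¹ * x)) + (f.1 σ⁻¹).1 (σ⁻¹ * x) := by rw [hc]; rfl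
    have e2 : (f.1 σ⁻¹).1 (σ⁻¹ * x) = -((f.1 σ).1 x) := by
      rw [z1_inv]
      show -((f.1 σ).1 (σ⁻¹⁻¹ * (σ⁻¹ * x))) = -((f.1 σ).1 x)
      rw [inv_inv, mul_inv_cancel_left]
    rw [e1, e2, inv_inv, mul_inv_cancel_left]
    abel

/-- Reduction step: subtracting the adjusting coboundary. -/
theorem key_step (f : Z1 G (IndM G H φ A)) (h0 : H) (h0neg : φ h0 = -1)
    (hK : ∀ h : H, φ h = 1 → Ff G H φ A f h = 0)
    (c0 : A) (hc0 : (-(2 * ((φ (piH G H 1) : ℤˣ) : ℤ))) • c0 = Ff G H φ A f h0) :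
    f ∈ B1 G (IndM G H φ A) := by
  set a : ℤˣ := φ (piH G H 1) with ha
  have hm0mem : (fun x => ((φ (piH G H x) : ℤˣ) : ℤ) • c0) ∈ IndM G H φ A := by
    intro x h
    show ((φ (piH G H (x * h)) : ℤˣ) : ℤ) • c0 = (φ h : ℤ) • (((φ (piH G H x) : ℤˣ) : ℤ) • c0)
    rw [piH_mul, map_mul]
    rw [Units.val_mul, mul_comm, mul_smul]
  set m0 : IndM G H φ A := ⟨fun x => ((φ (piH G H x) : ℤˣ) : ℤ) • c0, hm0mem⟩ with hm0
  have hb : coboundHom G (IndM G H φ A) m0 ∈ B1 G (IndM G H φ A) := ⟨m0, rfl⟩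
  have hδ : ∀ h : H, Ff G H φ A (coboundHom G (IndM G H φ A) m0) h = Ff G H φ A f h := by
    intro h
    have e0 : Ff G H φ A (coboundHom G (IndM G H φ A) m0) h
        = m0.1 ((h : G)⁻¹ * 1) - m0.1 1 := rfl
    rw [e0, mul_one]
    have e1 : (h : G)⁻¹ = (1 : G) * ((h⁻¹ : H) : G) := by simp
    have e2 : m0.1 ((h:G)⁻¹) = ((φ (piH G H 1 * h⁻¹) : ℤˣ) : ℤ) • c0 := by
      rw [e1]
      show ((φ (piH G H (1 * (h⁻¹ : H))) : ℤˣ) : ℤ) • c0 = _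
      rw [piH_mul]
    rw [e2, map_mul, map_inv, units_int_inv]
    rcases Int.units_eq_one_or (φ h) with hφh | hφh
    · rw [hK h hφh, hφh, mul_one]
      show ((a : ℤ)) • c0 - ((a:ℤ)) • c0 = 0
      abel
    · rw [Ff_neg_eq G H φ A f hK h0 h h0neg hφh, ← hc0, hφh]
      show ((a * -1 : ℤˣ) : ℤ) • c0 - ((a:ℤ)) • c0 = (-(2 * (a : ℤ))) • c0
      have : ((a * -1 : ℤˣ) : ℤ) = -(a : ℤ) := by simp
      rw [this, ← sub_smul]
      congr 1
      ring
  have hsub : f - coboundHom G (IndM G H φ A) m0 ∈ B1 G (IndM G H φ A) := by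
    apply key_vanish
    intro h
    show (((f - coboundHom G (IndM G H φ A) m0) : Z1 G (IndM G H φ A)).1 (h:G)).1 1 = 0
    have : ((f - coboundHom G (IndM G H φ A) m0).1 (h:G)).1 1
        = (f.1 (h:G)).1 1 - ((coboundHom G (IndM G H φ A) m0).1 (h:G)).1 1 := rfl
    rw [this]
    have := hδ h
    unfold Ff at this
    rw [this]
    abel
  have := add_mem hsub hb
  simpa using this
end KeyLemmas
section H1Z
variable (G : Type) [Group G] (H : Subgroup G) (φ : H →* ℤˣ)

/-- Over `ℤ`, the `H`-cochain vanishes on `ker φ` automatically. -/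
theorem Ff_ker_int [Finite G] (f : Z1 G (IndM G H φ ℤ)) (k : H) (hk : φ k = 1) :
    Ff G H φ ℤ f k = 0 := by
  have : Finite H := Subgroup.instFiniteSubtypeMem H
  have h1 := Ff_ker_torsion G H φ ℤ f k hk
  have h2 : (orderOf k : ℤ) * Ff G H φ ℤ f k = 0 := by
    rw [← nsmul_eq_mul]; exact_mod_cast h1
  have h3 : (orderOf k : ℤ) ≠ 0 := Int.natCast_ne_zero.mpr (orderOf_pos k).ne'
  exact (mul_eq_zero.mp h2).resolve_left h3

/-- Value extracted from a restriction being a coboundary. -/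
theorem res_val (A : Type) [AddCommGroup A] (f : Z1 G (IndM G H φ A)) (k : H)
    (hres : resZ1 G (IndM G H φ A) (Subgroup.zpowers (k : G)) f
      ∈ B1 (Subgroup.zpowers (k : G)) (IndM G H φ A)) :
    ∃ v : A, Ff G H φ A f k = (φ k : ℤ) • v - v := by
  obtain ⟨m, hm⟩ := hres
  refine ⟨m.1 1, ?_⟩
  set a : Subgroup.zpowers (k : G) := ⟨(k : G), Subgroup.mem_zpowers _⟩ with haa
  have h1 : ((coboundHom _ (IndM G H φ A) m).1 a).1 1
      = ((resZ1 G (IndM G H φ A) (Subgroup.zpowers (k : G)) f).1 a).1 1 := by rw [hm]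
  have h2 : ((resZ1 G (IndM G H φ A) (Subgroup.zpowers (k : G)) f).1 a).1 1
      = Ff G H φ A f k := rfl
  have h3 : ((coboundHom _ (IndM G H φ A) m).1 a).1 1
      = m.1 ((k : G)⁻¹ * 1) - m.1 1 := rfl
  have h4 : m.1 ((k : G)⁻¹ * 1) = (φ k : ℤ) • m.1 1 := by
    rw [mul_one]
    have e := m.2 1 k⁻¹
    rw [one_mul] at e
    have : m.1 (((k⁻¹ : H) : G)) = (φ k⁻¹ : ℤ) • m.1 1 := e
    rw [map_inv, units_int_inv] at this
    exact this
  rw [← h2, ← h1, h3, h4]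

/-- Ш¹-style vanishing at cocycle level, divisible coefficients. -/
theorem b1_of_res_div (A : Type) [AddCommGroup A]
    (hdiv : ∀ t : A, ∃ s : A, (2 : ℤ) • s = t)
    (f : Z1 G (IndM G H φ A))
    (hres : ∀ g : G, resZ1 G (IndM G H φ A) (Subgroup.zpowers g) f
      ∈ B1 (Subgroup.zpowers g) (IndM G H φ A)) :
    f ∈ B1 G (IndM G H φ A) := by
  have hK : ∀ h : H, φ h = 1 → Ff G H φ A f h = 0 := by
    intro h hh
    obtain ⟨v, hv⟩ := res_val G H φ A f h (hres (h : G))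
    rw [hv, hh]
    simp
  by_cases htriv : ∀ h : H, φ h = 1
  · exact key_vanish G H φ A f (fun h => hK h (htriv h))
  · push_neg at htriv
    obtain ⟨h0, hh0⟩ := htriv
    have h0neg : φ h0 = -1 := by
      rcases Int.units_eq_one_or (φ h0) with h | h
      · exact absurd h hh0
      · exact h
    set a : ℤˣ := φ (piH G H 1) with ha
    obtain ⟨s, hs⟩ := hdiv ((a : ℤ) • Ff G H φ A f h0)
    refine key_step G H φ A f h0 h0neg hK (-s) ?_
    rw [smul_neg, ← neg_smul, neg_neg]
    have : (2 * (a : ℤ)) • s = (a : ℤ) • ((2 : ℤ) • s) := by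
      rw [mul_comm, mul_smul]
    rw [this, hs, ← mul_smul]
    have : (a : ℤ) * (a : ℤ) = 1 := by
      rw [← Units.val_mul, Int.units_mul_self a, Units.val_one]
    rw [this, one_smul]

/-- Ш¹-style vanishing at cocycle level over `ℤ`. -/
theorem b1_of_res_int [Finite G] (f : Z1 G (IndM G H φ ℤ))
    (hres : ∀ g : G, resZ1 G (IndM G H φ ℤ) (Subgroup.zpowers g) f
      ∈ B1 (Subgroup.zpowers g) (IndM G H φ ℤ)) :
    f ∈ B1 G (IndM G H φ ℤ) := by
  have hK : ∀ h : H, φ h = 1 → Ff G H φ ℤ f h = 0 := fun h hh => Ff_ker_int G H φ f h hh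
  by_cases htriv : ∀ h : H, φ h = 1
  · exact key_vanish G H φ ℤ f (fun h => hK h (htriv h))
  · push_neg at htriv
    obtain ⟨h0, hh0⟩ := htriv
    have h0neg : φ h0 = -1 := by
      rcases Int.units_eq_one_or (φ h0) with h | h
      · exact absurd h hh0
      · exact h
    obtain ⟨v, hv⟩ := res_val G H φ ℤ f h0 (hres (h0 : G))
    rw [h0neg] at hv
    set a : ℤˣ := φ (piH G H 1) with ha
    refine key_step G H φ ℤ f h0 h0neg hK ((a : ℤ) * v) ?_
    rw [hv]
    have : (a : ℤ) * (a : ℤ) = 1 := by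
      rw [← Units.val_mul, Int.units_mul_self a, Units.val_one]
    have e : ((-1 : ℤˣ) : ℤ) = -1 := rfl
    rw [e, smul_eq_mul, smul_eq_mul]
    linear_combination (-2 * v) * this

/-- Every element of `Ш¹(G, IndM A)` is zero (divisible case or `ℤ`). -/
theorem sha1_indM_zero_int [Finite G] (x : H1 G (IndM G H φ ℤ))
    (hx : x ∈ Sha1 G (IndM G H φ ℤ)) : x = 0 := by
  induction x using QuotientAddGroup.induction_on with
  | H f =>
    rw [QuotientAddGroup.eq_zero_iff]
    refine b1_of_res_int G H φ f (fun g => ?_)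
    rw [Sha1, AddSubgroup.mem_iInf] at hx
    have := hx g
    rw [AddMonoidHom.mem_ker] at this
    rw [← QuotientAddGroup.eq_zero_iff]
    exact this
end H1Z
section IsoZ
variable (G : Type) [Group G] (H : Subgroup G) (φ : H →* ℤˣ)

/-- Half-difference of two signs. -/
def dd (a b : ℤˣ) : ℤ := if a = b then 0 else (a : ℤ)

theorem dd_tri (a b c : ℤˣ) : dd a c = dd a b + dd b c := by
  rcases Int.units_eq_one_or a with ha | ha <;>
  rcases Int.units_eq_one_or b with hb | hb <;>
  rcases Int.units_eq_one_or c with hc | hc <;>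
  subst ha hb hc <;> simp [dd]

theorem dd_mul (a b u : ℤˣ) : dd (a * u) (b * u) = (u : ℤ) * dd a b := by
  rcases Int.units_eq_one_or a with ha | ha <;>
  rcases Int.units_eq_one_or b with hb | hb <;>
  rcases Int.units_eq_one_or u with hu | hu <;>
  subst ha hb hu <;> simp [dd]

/-- The generating function. -/
noncomputable def genFun (σ : G) : IndM G H φ ℤ :=
  ⟨fun x => dd (φ (piH G H x)) (φ (piH G H (σ⁻¹ * x))), by
    intro x h
    show dd (φ (piH G H (x * h))) (φ (piH G H (σ⁻¹ * (x * h))))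
        = (φ h : ℤ) • dd (φ (piH G H x)) (φ (piH G H (σ⁻¹ * x)))
    rw [← mul_assoc, piH_mul, piH_mul, map_mul, map_mul, dd_mul, smul_eq_mul]⟩

/-- The generating cocycle. -/
noncomputable def genCocycle : Z1 G (IndM G H φ ℤ) :=
  ⟨fun σ => genFun G H φ σ, by
    intro g h
    apply Subtype.ext; funext x
    have e : ((g • genFun G H φ h + genFun G H φ g : IndM G H φ ℤ) : G → ℤ) x
        = (genFun G H φ h : G → ℤ) (g⁻¹ * x) + (genFun G H φ g : G → ℤ) x := rfl
    show (genFun G H φ (g * h) : G → ℤ) x = _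
    rw [e]
    show dd (φ (piH G H x)) (φ (piH G H ((g * h)⁻¹ * x)))
        = dd (φ (piH G H (g⁻¹ * x))) (φ (piH G H (h⁻¹ * (g⁻¹ * x))))
          + dd (φ (piH G H x)) (φ (piH G H (g⁻¹ * x)))
    rw [mul_inv_rev, mul_assoc, add_comm]
    exact dd_tri _ _ _⟩

theorem genCocycle_val (h0 : H) (h0neg : φ h0 = -1) :
    ((genCocycle G H φ).1 ((h0 : G))).1 1 = ((φ (piH G H 1) : ℤˣ) : ℤ) := by
  show dd (φ (piH G H 1)) (φ (piH G H ((h0 : G)⁻¹ * 1))) = _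
  rw [mul_one]
  have e1 : (h0 : G)⁻¹ = (1 : G) * ((h0⁻¹ : H) : G) := by simp
  have e2 : φ (piH G H ((h0 : G)⁻¹)) = φ (piH G H 1) * φ h0⁻¹ := by
    rw [e1, piH_mul, map_mul]
  rw [e2, map_inv, units_int_inv, h0neg]
  rcases Int.units_eq_one_or (φ (piH G H 1)) with h | h <;> rw [h] <;> simp [dd]

/-- Evaluation homomorphism to `ZMod 2`. -/
noncomputable def epsHom (h0 : H) : Z1 G (IndM G H φ ℤ) →+ ZMod 2 :=
  AddMonoidHom.mk' (fun f => (((f.1 ((h0 : G))).1 1 : ℤ) : ZMod 2)) (by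
    intro f f'
    show ((((f + f').1 ((h0 : G))).1 1 : ℤ) : ZMod 2)
        = (((f.1 ((h0:G))).1 1 : ℤ) : ZMod 2) + (((f'.1 ((h0:G))).1 1 : ℤ) : ZMod 2)
    have e : ((f + f').1 ((h0 : G))).1 1 = (f.1 ((h0:G))).1 1 + (f'.1 ((h0:G))).1 1 := rfl
    rw [e]
    push_cast
    ring)

theorem epsHom_b1 (h0 : H) (h0neg : φ h0 = -1) (f : Z1 G (IndM G H φ ℤ))
    (hf : f ∈ B1 G (IndM G H φ ℤ)) : epsHom G H φ h0 f = 0 := by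
  obtain ⟨m, rfl⟩ := hf
  show ((((coboundHom _ _ m).1 ((h0 : G))).1 1 : ℤ) : ZMod 2) = 0
  have h3 : ((coboundHom _ (IndM G H φ ℤ) m).1 ((h0:G))).1 1
      = m.1 ((h0 : G)⁻¹ * 1) - m.1 1 := rfl
  have h4 : m.1 ((h0 : G)⁻¹ * 1) = (φ h0 : ℤ) • m.1 1 := by
    rw [mul_one]
    have e := m.2 1 h0⁻¹
    rw [one_mul] at e
    have : m.1 (((h0⁻¹ : H) : G)) = (φ h0⁻¹ : ℤ) • m.1 1 := e
    rw [map_inv, units_int_inv] at this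
    exact this
  rw [h3, h4, h0neg]
  have : ((-1 : ℤˣ) : ℤ) • m.1 1 - m.1 1 = (2 : ℤ) * (-(m.1 1)) := by
    have hneg : ((-1 : ℤˣ) : ℤ) = -1 := rfl
    rw [hneg, smul_eq_mul]; ring
  rw [this]
  rw [ZMod.intCast_zmod_eq_zero_iff_dvd]
  exact Dvd.intro _ rfl

/-- `H¹(G, IndM ℤ) ≅ ℤ/2` when `φ` is nontrivial. -/
noncomputable def h1IndMEquiv [Finite G] (h0 : H) (h0neg : φ h0 = -1) :
    H1 G (IndM G H φ ℤ) ≃+ ZMod 2 := by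
  refine AddEquiv.ofBijective
    (QuotientAddGroup.lift _ (epsHom G H φ h0) (fun f hf => AddMonoidHom.mem_ker.mpr (epsHom_b1 G H φ h0 h0neg f hf)))
    ⟨?_, ?_⟩
  · rw [injective_iff_map_eq_zero]
    intro x
    induction x using QuotientAddGroup.induction_on with
    | H f =>
      intro hf
      rw [QuotientAddGroup.lift_mk] at hf
      have heven : ((((f.1 ((h0 : G))).1 1 : ℤ) : ZMod 2)) = 0 := hf
      rw [ZMod.intCast_zmod_eq_zero_iff_dvd] at heven
      obtain ⟨t, ht⟩ := heven
      rw [QuotientAddGroup.eq_zero_iff]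
      have hK : ∀ h : H, φ h = 1 → Ff G H φ ℤ f h = 0 :=
        fun h hh => Ff_ker_int G H φ f h hh
      set a : ℤˣ := φ (piH G H 1) with ha
      refine key_step G H φ ℤ f h0 h0neg hK (-((a : ℤ) * t)) ?_
      have haa : (a : ℤ) * (a : ℤ) = 1 := by
        rw [← Units.val_mul, Int.units_mul_self a, Units.val_one]
      have : Ff G H φ ℤ f h0 = 2 * t := ht
      rw [this, smul_eq_mul]
      linear_combination (2 * t) * haa
  · intro y
    have hy : y = 0 ∨ y = 1 := by
      have h2 : ∀ z : ZMod 2, z = 0 ∨ z = 1 := by decide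
      exact h2 y
    rcases hy with hz | hz
    · exact ⟨0, by rw [hz, map_zero]⟩
    · refine ⟨QuotientAddGroup.mk (genCocycle G H φ), ?_⟩
      rw [QuotientAddGroup.lift_mk]
      show ((((genCocycle G H φ).1 ((h0 : G))).1 1 : ℤ) : ZMod 2) = y
      rw [genCocycle_val G H φ h0 h0neg, hz]
      rcases Int.units_eq_one_or (φ (piH G H 1)) with h | h
      · rw [h]; decide
      · rw [h]; decide

/-- Trivial character: `H¹` vanishes. -/
theorem h1_trivial_zero [Finite G] (htriv : ∀ h : H, φ h = 1)
    (x : H1 G (IndM G H φ ℤ)) : x = 0 := by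
  induction x using QuotientAddGroup.induction_on with
  | H f =>
    rw [QuotientAddGroup.eq_zero_iff]
    exact key_vanish G H φ ℤ f (fun h => Ff_ker_int G H φ f h (htriv h))

end IsoZ
section QMod
variable (G : Type) [Group G] (H : Subgroup G) (φ : H →* ℤˣ)

/-- Inclusion of the integral monomial lattice into the rational one. -/
def iotaQ : indSign G H φ →+ IndM G H φ ℚ where
  toFun f := ⟨fun x => ((f : G → ℤ) x : ℚ), by
    intro g h
    have := f.2 g h
    show (((f : G → ℤ) (g * h) : ℤ) : ℚ) = (φ h : ℤ) • (((f : G → ℤ) g : ℤ) : ℚ)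
    rw [this, zsmul_eq_mul]
    push_cast
    ring⟩
  map_zero' := by apply Subtype.ext; funext x; simp
  map_add' f f' := by
    apply Subtype.ext; funext x
    show (((f + f' : indSign G H φ) : G → ℤ) x : ℚ) = (((f : G → ℤ) x : ℚ)) + (((f' : G → ℤ) x : ℚ))
    have : ((f + f' : indSign G H φ) : G → ℤ) x = (f : G → ℤ) x + (f' : G → ℤ) x := rfl
    rw [this]; push_cast; ring

theorem iotaQ_apply (f : indSign G H φ) (x : G) :
    ((iotaQ G H φ f : G → ℚ)) x = ((f : G → ℤ) x : ℚ) := rfl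

theorem iotaQ_equiv : ∀ (g : G) (m : indSign G H φ),
    iotaQ G H φ (g • m) = g • iotaQ G H φ m := fun _ _ => rfl

/-- Scalar multiplication by a rational on the rational monomial module. -/
def qsm (q : ℚ) : IndM G H φ ℚ →+ IndM G H φ ℚ where
  toFun m := ⟨fun x => q * (m : G → ℚ) x, by
    intro g h
    show q * (m : G → ℚ) (g * h) = (φ h : ℤ) • (q * (m : G → ℚ) g)
    rw [m.2 g h, zsmul_eq_mul, zsmul_eq_mul]
    ring⟩
  map_zero' := by apply Subtype.ext; funext x; show q * (0 : ℚ) = 0; ring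
  map_add' m m' := by
    apply Subtype.ext; funext x
    show q * ((m + m' : IndM G H φ ℚ) : G → ℚ) x = q * (m : G → ℚ) x + q * (m' : G → ℚ) x
    have : ((m + m' : IndM G H φ ℚ) : G → ℚ) x = (m : G → ℚ) x + (m' : G → ℚ) x := rfl
    rw [this]; ring

theorem qsm_apply (q : ℚ) (m : IndM G H φ ℚ) (x : G) :
    ((qsm G H φ q m : IndM G H φ ℚ) : G → ℚ) x = q * (m : G → ℚ) x := rfl

/-- The circle group `ℚ/ℤ`. -/
abbrev QT := ℚ ⧸ AddSubgroup.zmultiples (1 : ℚ)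

/-- Quotient map. -/
def qmk : ℚ →+ QT := QuotientAddGroup.mk' _

theorem qmk_int (z : ℤ) : qmk ((z : ℚ)) = 0 := by
  rw [qmk, QuotientAddGroup.mk'_apply, QuotientAddGroup.eq_zero_iff]
  exact ⟨z, by show z • (1 : ℚ) = (z : ℚ); rw [zsmul_eq_mul, mul_one]⟩

theorem qmk_zero_iff (x : ℚ) : qmk x = 0 ↔ ∃ z : ℤ, (z : ℚ) = x := by
  rw [qmk, QuotientAddGroup.mk'_apply, QuotientAddGroup.eq_zero_iff]
  constructor
  · rintro ⟨z, hz⟩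
    refine ⟨z, ?_⟩
    simpa [zsmul_eq_mul] using hz
  · rintro ⟨z, hz⟩
    refine ⟨z, ?_⟩
    show z • (1 : ℚ) = x
    rw [zsmul_eq_mul, mul_one]; exact hz

theorem qt_div2 : ∀ t : QT, ∃ s : QT, (2 : ℤ) • s = t := by
  intro t
  induction t using QuotientAddGroup.induction_on with
  | H q =>
    refine ⟨QuotientAddGroup.mk (q / 2), ?_⟩
    have : ((2 : ℤ) • QuotientAddGroup.mk (q / 2) : QT)
        = QuotientAddGroup.mk ((2 : ℤ) • (q / 2)) := by
      rw [← QuotientAddGroup.mk_zsmul]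
    rw [this]
    congr 1
    rw [zsmul_eq_mul]
    push_cast
    ring

/-- Reduction from rational to `ℚ/ℤ` coefficients. -/
def qred : IndM G H φ ℚ →+ IndM G H φ QT where
  toFun m := ⟨fun x => qmk ((m : G → ℚ) x), by
    intro g h
    show qmk ((m : G → ℚ) (g * h)) = (φ h : ℤ) • qmk ((m : G → ℚ) g)
    rw [m.2 g h, map_zsmul]⟩
  map_zero' := by apply Subtype.ext; funext x; show qmk 0 = 0; rw [map_zero]
  map_add' m m' := by
    apply Subtype.ext; funext x
    show qmk (((m + m' : IndM G H φ ℚ) : G → ℚ) x) = qmk ((m : G → ℚ) x) + qmk ((m' : G → ℚ) x)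
    have : ((m + m' : IndM G H φ ℚ) : G → ℚ) x = (m : G → ℚ) x + (m' : G → ℚ) x := rfl
    rw [this, map_add]

theorem qred_apply (m : IndM G H φ ℚ) (x : G) :
    ((qred G H φ m : IndM G H φ QT) : G → QT) x = qmk ((m : G → ℚ) x) := rfl

theorem qred_equiv : ∀ (g : G) (m : IndM G H φ ℚ),
    qred G H φ (g • m) = g • qred G H φ m := fun _ _ => rfl

theorem qred_iotaQ (f : indSign G H φ) : qred G H φ (iotaQ G H φ f) = 0 := by
  apply Subtype.ext; funext x
  show qmk (((f : G → ℤ) x : ℚ)) = 0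
  exact qmk_int _

theorem qred_surj : Function.Surjective (qred G H φ) := by
  intro m
  have sec : ∀ t : QT, ∃ q : ℚ, qmk q = t := fun t => QuotientAddGroup.mk'_surjective _ t
  choose ρ hρ using sec
  refine ⟨⟨fun x => ((φ (piH G H x) : ℤˣ) : ℤ) • ρ ((m : G → QT) (rsec G H x)), ?_⟩, ?_⟩
  · intro g h
    show ((φ (piH G H (g * h)) : ℤˣ) : ℤ) • ρ ((m : G → QT) (rsec G H (g * h)))
        = (φ h : ℤ) • (((φ (piH G H g) : ℤˣ) : ℤ) • ρ ((m : G → QT) (rsec G H g)))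
    rw [piH_mul, rsec_mul, map_mul, Units.val_mul, mul_comm, mul_smul]
  · apply Subtype.ext; funext x
    show qmk (((φ (piH G H x) : ℤˣ) : ℤ) • ρ ((m : G → QT) (rsec G H x))) = (m : G → QT) x
    rw [map_zsmul, hρ]
    have := m.2 (rsec G H x) (piH G H x)
    rw [rsec_piH] at this
    exact this.symm

end QMod
section Sha2Single
variable (G : Type) [Group G] (H : Subgroup G) (φ : H →* ℤˣ)

/-- Evaluation of the integral module at a point. -/
def evM (x : G) : indSign G H φ →+ ℤ :=
  (Pi.evalAddMonoidHom (fun _ : G => ℤ) x).comp (indSign G H φ).subtype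

theorem evM_apply (x : G) (m : indSign G H φ) : evM G H φ x m = (m : G → ℤ) x := rfl

theorem evM_smul (x g : G) (m : indSign G H φ) :
    evM G H φ x (g • m) = evM G H φ (g⁻¹ * x) m := rfl

/-- Evaluation of the rational module at a point. -/
def evQ (x : G) : IndM G H φ ℚ →+ ℚ :=
  (Pi.evalAddMonoidHom (fun _ : G => ℚ) x).comp (IndM G H φ ℚ).subtype

theorem evQ_apply (x : G) (m : IndM G H φ ℚ) : evQ G H φ x m = (m : G → ℚ) x := rfl

theorem b2_of_res [Finite G] (c : Z2 G (indSign G H φ))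
    (hres : ∀ g : G, resZ2 G (indSign G H φ) (Subgroup.zpowers g) c
      ∈ B2 (Subgroup.zpowers g) (indSign G H φ)) :
    c ∈ B2 G (indSign G H φ) := by
  classical
  letI : Fintype G := Fintype.ofFinite G
  set n : ℕ := Fintype.card G with hn
  have hn0 : ((n : ℤ) : ℚ) ≠ 0 := by
    have h1 : n ≠ 0 := (Fintype.card_pos (α := G)).ne'
    exact_mod_cast h1
  -- the summed cochain
  set S : G → indSign G H φ := fun g => ∑ τ : G, c.1 g τ with hSdef
  -- value-level summed cocycle identity
  have hSval : ∀ g h x : G,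
      (S h : G → ℤ) (g⁻¹ * x) - (S (g * h) : G → ℤ) x + (S g : G → ℤ) x
        = (n : ℤ) * ((c.1 g h : G → ℤ) x) := by
    intro g h x
    have hsum : (∑ k : G, (g • c.1 h k - c.1 (g * h) k + c.1 g (h * k) - c.1 g h)) = 0 :=
      Finset.sum_eq_zero (fun k _ => c.2 g h k)
    have h1 := congrArg (evM G H φ x) hsum
    rw [map_sum, map_zero] at h1
    simp only [map_sub, map_add, evM_smul] at h1
    rw [Finset.sum_sub_distrib, Finset.sum_add_distrib, Finset.sum_sub_distrib] at h1
    have e1 : ∑ k : G, evM G H φ (g⁻¹ * x) (c.1 h k) = evM G H φ (g⁻¹ * x) (S h) :=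
      (map_sum _ _ _).symm
    have e2 : ∑ k : G, evM G H φ x (c.1 (g * h) k) = evM G H φ x (S (g * h)) :=
      (map_sum _ _ _).symm
    have e3 : ∑ k : G, evM G H φ x (c.1 g (h * k)) = evM G H φ x (S g) := by
      rw [show (∑ k : G, evM G H φ x (c.1 g (h * k)))
          = ∑ k : G, (fun k => evM G H φ x (c.1 g k)) ((Equiv.mulLeft h) k) from rfl,
        Equiv.sum_comp (Equiv.mulLeft h) (fun k => evM G H φ x (c.1 g k))]
      exact (map_sum _ _ _).symm
    have e4 : ∑ _k : G, evM G H φ x (c.1 g h) = (n : ℤ) * evM G H φ x (c.1 g h) := by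
      rw [Finset.sum_const, Finset.card_univ, nsmul_eq_mul, ← hn]
    rw [e1, e2, e3, e4] at h1
    have : evM G H φ (g⁻¹ * x) (S h) - evM G H φ x (S (g * h)) + evM G H φ x (S g)
        = (n : ℤ) * evM G H φ x (c.1 g h) := by linarith
    exact this
  -- the rational potential
  have humem : ∀ g : G, (fun x => (((S g : G → ℤ) x : ℚ)) / ((n : ℤ) : ℚ)) ∈ IndM G H φ ℚ := by
    intro g x h
    show (((S g : G → ℤ) (x * h) : ℚ)) / ((n:ℤ):ℚ) = (φ h : ℤ) • ((((S g : G → ℤ) x : ℚ)) / ((n:ℤ):ℚ))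
    rw [(S g).2 x h, zsmul_eq_mul]
    push_cast
    ring
  set u : G → IndM G H φ ℚ := fun g => ⟨_, humem g⟩ with hudef
  have hu : ∀ g h : G, g • u h - u (g * h) + u g = iotaQ G H φ (c.1 g h) := by
    intro g h
    apply Subtype.ext; funext x
    show (((S h : G → ℤ) (g⁻¹ * x) : ℚ)) / ((n:ℤ):ℚ) - (((S (g*h) : G → ℤ) x : ℚ)) / ((n:ℤ):ℚ)
        + (((S g : G → ℤ) x : ℚ)) / ((n:ℤ):ℚ) = (((c.1 g h : G → ℤ) x : ℤ) : ℚ)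
    have hQ : (((S h : G → ℤ) (g⁻¹ * x) : ℚ)) - (((S (g*h) : G → ℤ) x : ℚ))
        + (((S g : G → ℤ) x : ℚ)) = ((n:ℤ):ℚ) * (((c.1 g h : G → ℤ) x : ℚ)) := by
      exact_mod_cast hSval g h x
    rw [div_sub_div_same, ← add_div, hQ, mul_div_cancel_left₀ _ hn0]
  -- the reduced 1-cocycle
  have hubarmem : (fun g => qred G H φ (u g)) ∈ Z1 G (IndM G H φ QT) := by
    intro g h
    have h2 : u (g * h) = g • u h + u g - iotaQ G H φ (c.1 g h) := by
      rw [← hu g h]; abel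
    show qred G H φ (u (g * h)) = g • qred G H φ (u h) + qred G H φ (u g)
    rw [h2, map_sub, map_add, qred_iotaQ, qred_equiv, sub_zero]
  set ubar : Z1 G (IndM G H φ QT) := ⟨fun g => qred G H φ (u g), hubarmem⟩ with hubardef
  -- restriction of ubar to each cyclic subgroup is a coboundary
  have hres1 : ∀ g : G, resZ1 G (IndM G H φ QT) (Subgroup.zpowers g) ubar
      ∈ B1 (Subgroup.zpowers g) (IndM G H φ QT) := by
    intro g
    set K := Subgroup.zpowers g with hK
    obtain ⟨v, hv2⟩ := hres g
    have hv3 : ∀ a b : K, (a : G) • v b - v (a * b) + v a = c.1 (a : G) (b : G) := by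
      intro a b
      exact congrArg (fun z => z.1 a b) hv2
    set d : K → IndM G H φ ℚ := fun a => u (a : G) - iotaQ G H φ (v a) with hd_def
    have hd : ∀ a b : K, d (a * b) = (a : G) • d b + d a := by
      intro a b
      have hvv : v (a * b) = (a : G) • v b + v a - c.1 (a : G) (b : G) := by
        rw [← hv3 a b]; abel
      have huu : u ((a : G) * (b : G)) = (a : G) • u (b : G) + u (a : G)
          - iotaQ G H φ (c.1 (a : G) (b : G)) := by
        rw [← hu (a : G) (b : G)]; abel
      have hiv : iotaQ G H φ (v (a * b)) = (a : G) • iotaQ G H φ (v b) + iotaQ G H φ (v a)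
          - iotaQ G H φ (c.1 (a : G) (b : G)) := by
        rw [hvv, (iotaQ G H φ).map_sub, (iotaQ G H φ).map_add, iotaQ_equiv]
      show u ((a * b : K) : G) - iotaQ G H φ (v (a * b)) = _
      rw [Subgroup.coe_mul, huu, hiv, hd_def]
      simp only [smul_sub]
      abel
    letI : Fintype K := Fintype.ofFinite K
    set k : ℕ := Fintype.card K with hk
    set kq : ℚ := (k : ℚ) with hkq
    have hk0 : kq ≠ 0 := by
      have h1 : k ≠ 0 := (Fintype.card_pos (α := K)).ne'
      rw [hkq]
      exact_mod_cast h1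
    set Sd : IndM G H φ ℚ := ∑ a : K, d a with hSd
    have hsd : ∀ a : K, Sd = (a : G) • Sd + k • d a := by
      intro a
      have e1 : ∑ b : K, d (a * b) = Sd := by
        rw [show (∑ b : K, d (a * b)) = ∑ b : K, d ((Equiv.mulLeft a) b) from rfl]
        exact Equiv.sum_comp (Equiv.mulLeft a) d
      have e2 : ∑ b : K, d (a * b) = (a : G) • Sd + k • d a := by
        rw [Finset.sum_congr rfl (fun b _ => hd a b), Finset.sum_add_distrib,
          ← Finset.smul_sum, Finset.sum_const, Finset.card_univ]
      exact e1.symm.trans e2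
    -- value form
    have hsdval : ∀ (a : K) (x : G), (Sd : G → ℚ) x
        = (Sd : G → ℚ) ((a : G)⁻¹ * x) + kq * ((d a : IndM G H φ ℚ) : G → ℚ) x := by
      intro a x
      have := congrArg (evQ G H φ x) (hsd a)
      rw [map_add, map_nsmul] at this
      rw [evQ_apply] at this
      have e5 : evQ G H φ x ((a : G) • Sd) = (Sd : G → ℚ) ((a : G)⁻¹ * x) := rfl
      rw [e5, nsmul_eq_mul, evQ_apply] at this
      rw [hkq]
      exact this
    set mQ' : IndM G H φ ℚ := qsm G H φ (-(1 / (k : ℚ))) Sd with hmQ'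
    have hda : ∀ a : K, (a : G) • mQ' - mQ' = d a := by
      intro a
      apply Subtype.ext; funext x
      show (-(1 / (k : ℚ))) * (Sd : G → ℚ) ((a : G)⁻¹ * x)
          - (-(1 / (k : ℚ))) * (Sd : G → ℚ) x = ((d a : IndM G H φ ℚ) : G → ℚ) x
      have hthis := hsdval a x
      have habs : ∀ (q A B D : ℚ), q ≠ 0 → B = A + q * D
          → -(1 / q) * A - (-(1 / q)) * B = D := by
        intro q A B D hq hBD
        rw [hBD]
        field_simp
        ring
      exact habs _ _ _ _ hk0 hthis
    refine ⟨qred G H φ mQ', ?_⟩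
    apply Subtype.ext; funext a
    show (a : G) • qred G H φ mQ' - qred G H φ mQ' = qred G H φ (u (a : G))
    rw [← qred_equiv, ← map_sub, hda a, hd_def]
    simp only [map_sub, qred_iotaQ, sub_zero]
  -- conclude ubar is a global coboundary
  have hubarB1 : ubar ∈ B1 G (IndM G H φ QT) :=
    b1_of_res_div G H φ QT qt_div2 ubar hres1
  obtain ⟨mbar, hmbar⟩ := hubarB1
  obtain ⟨mQ, hmQ⟩ := qred_surj G H φ mbar
  set u' : G → IndM G H φ ℚ := fun g => u g - (g • mQ - mQ) with hu'def
  have hq0 : ∀ g : G, qred G H φ (u' g) = 0 := by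
    intro g
    have h1 : qred G H φ (u' g) = qred G H φ (u g) - (g • mbar - mbar) := by
      rw [hu'def]
      simp only [map_sub]
      rw [qred_equiv, hmQ]
    have h2 : g • mbar - mbar = qred G H φ (u g) := by
      have := congrArg (fun z : Z1 G (IndM G H φ QT) => z.1 g) hmbar
      exact this
    rw [h1, h2, sub_self]
  have hu' : ∀ g h : G, g • u' h - u' (g * h) + u' g = iotaQ G H φ (c.1 g h) := by
    intro g h
    show g • (u h - (h • mQ - mQ)) - (u (g * h) - ((g * h) • mQ - mQ))
        + (u g - (g • mQ - mQ)) = _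
    rw [smul_sub, smul_sub, mul_smul, ← hu g h]
    abel
  have hint : ∀ g x : G, ∃ z : ℤ, (z : ℚ) = (u' g : G → ℚ) x := by
    intro g x
    have h0 : qmk ((u' g : G → ℚ) x) = 0 := by
      have := congrArg (fun m : IndM G H φ QT => (m : G → QT) x) (hq0 g)
      exact this
    exact (qmk_zero_iff _).mp h0
  choose W hW using hint
  have hwmem : ∀ g : G, (fun x => W g x) ∈ indSign G H φ := by
    intro g x h
    have h1 : ((W g (x * h) : ℤ) : ℚ) = (φ h : ℤ) • ((W g x : ℤ) : ℚ) := by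
      rw [hW g (x * h), hW g x]
      exact (u' g).2 x h
    rw [zsmul_eq_mul] at h1
    exact_mod_cast h1
  refine ⟨fun g => ⟨fun x => W g x, hwmem g⟩, ?_⟩
  apply Subtype.ext; funext g; funext h
  apply Subtype.ext; funext x
  show W h (g⁻¹ * x) - W (g * h) x + W g x = (c.1 g h : G → ℤ) x
  have hQeq : (u' h : G → ℚ) (g⁻¹ * x) - (u' (g * h) : G → ℚ) x + (u' g : G → ℚ) x
      = (((c.1 g h : G → ℤ) x : ℤ) : ℚ) :=
    congrArg (fun m : IndM G H φ ℚ => (m : G → ℚ) x) (hu' g h)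
  rw [← hW h (g⁻¹ * x), ← hW (g * h) x, ← hW g x] at hQeq
  exact_mod_cast hQeq

/-- `Ш²` of a single monomial lattice vanishes. -/
theorem sha2_indSign_zero [Finite G] (x : H2 G (indSign G H φ))
    (hx : x ∈ Sha2 G (indSign G H φ)) : x = 0 := by
  induction x using QuotientAddGroup.induction_on with
  | H c =>
    rw [QuotientAddGroup.eq_zero_iff]
    refine b2_of_res G H φ c (fun g => ?_)
    rw [Sha2, AddSubgroup.mem_iInf] at hx
    have := hx g
    rw [AddMonoidHom.mem_ker] at this
    rw [← QuotientAddGroup.eq_zero_iff]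
    exact this

end Sha2Single
section Assemble
variable (G : Type) [Group G] [Finite G]

/-- Bridge on `H¹`. -/
noncomputable def h1Bridge (H : Subgroup G) (φ : H →* ℤˣ) :
    H1 G (indSign G H φ) ≃+ H1 G (IndM G H φ ℤ) :=
  h1Equiv G (bridge G H φ) (bridge_equiv G H φ)

theorem sha1_indSign_zero (H : Subgroup G) (φ : H →* ℤˣ)
    (x : H1 G (indSign G H φ)) (hx : x ∈ Sha1 G (indSign G H φ)) : x = 0 := by
  have h1 : h1Bridge G H φ x ∈ Sha1 G (IndM G H φ ℤ) := by
    rw [h1Bridge, h1Equiv_apply]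
    exact sha1_map G _ _ x hx
  have h2 : h1Bridge G H φ x = 0 := sha1_indM_zero_int G H φ _ h1
  exact (AddEquiv.map_eq_zero_iff _).mp h2

theorem exists_neg (H : Subgroup G) (φ : H →* ℤˣ) (hφ : φ ≠ 1) : ∃ h0 : H, φ h0 = -1 := by
  by_contra hc
  push_neg at hc
  apply hφ
  ext h'
  rcases Int.units_eq_one_or (φ h') with e | e
  · rw [e]; rfl
  · exact absurd e (hc h')

/-- `H¹` of a monomial lattice with nontrivial character. -/
noncomputable def h1IndSignEquiv (H : Subgroup G) (φ : H →* ℤˣ) (h0 : H) (h0neg : φ h0 = -1) :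
    H1 G (indSign G H φ) ≃+ ZMod 2 :=
  (h1Bridge G H φ).trans (h1IndMEquiv G H φ h0 h0neg)

theorem h1_indSign_triv (H : Subgroup G) (φ : H →* ℤˣ) (hφ : φ = 1)
    (x : H1 G (indSign G H φ)) : x = 0 := by
  have h1 : h1Bridge G H φ x = 0 :=
    h1_trivial_zero G H φ (fun h => by rw [hφ]; rfl) _
  exact (AddEquiv.map_eq_zero_iff _).mp h1

variable {ι : Type} [Fintype ι] (K : ι → Subgroup G) (ψ : ∀ i, (K i) →* ℤˣ)

/-- Chosen equivalence for nontrivial components. -/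
noncomputable def compEquiv (j : {i : ι // ψ i ≠ 1}) :
    H1 G (indSign G (K j.1) (ψ j.1)) ≃+ ZMod 2 :=
  h1IndSignEquiv G (K j.1) (ψ j.1) (Classical.choose (exists_neg G _ _ j.2))
    (Classical.choose_spec (exists_neg G _ _ j.2))

set_option maxHeartbeats 2000000 in
/-- `H¹` of a direct sum of monomial lattices. -/
noncomputable def h1PiEquiv :
    H1 G (∀ i, indSign G (K i) (ψ i)) ≃+ ({i : ι // ψ i ≠ 1} → ZMod 2) := by
  classical
  refine AddEquiv.ofBijective
    (AddMonoidHom.mk' (fun x j => compEquiv G K ψ j (piProjH1 G j.1 x)) ?_) ⟨?_, ?_⟩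
  · intro x y
    funext j
    simp [map_add]
  · rw [injective_iff_map_eq_zero]
    intro x hx
    refine piProjH1_inj G x (fun i => ?_)
    by_cases hi : ψ i ≠ 1
    · have := congrFun hx ⟨i, hi⟩
      simp only [Pi.zero_apply] at this
      have h2 : compEquiv G K ψ ⟨i, hi⟩ (piProjH1 G i x) = 0 := this
      exact (AddEquiv.map_eq_zero_iff _).mp h2
    · push_neg at hi
      exact h1_indSign_triv G (K i) (ψ i) hi _
  · intro y
    obtain ⟨x, hx⟩ := piProjH1_surj G
      (fun i => (if hi : ψ i ≠ 1 then (compEquiv G K ψ ⟨i, hi⟩).symm (y ⟨i, hi⟩) else 0 :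
        H1 G (indSign G (K i) (ψ i))))
    refine ⟨x, ?_⟩
    funext j
    show compEquiv G K ψ j (piProjH1 G j.1 x) = y j
    rw [hx j.1]
    have : (if hi : ψ j.1 ≠ 1 then (compEquiv G K ψ ⟨j.1, hi⟩).symm (y ⟨j.1, hi⟩) else 0)
        = (compEquiv G K ψ j).symm (y j) := by
      rw [dif_pos j.2]
    rw [this]
    exact (compEquiv G K ψ j).apply_symm_apply _

theorem sha1_pi_zero (x : H1 G (∀ i, indSign G (K i) (ψ i)))
    (hx : x ∈ Sha1 G (∀ i, indSign G (K i) (ψ i))) : x = 0 := by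
  refine piProjH1_inj G x (fun i => ?_)
  exact sha1_indSign_zero G (K i) (ψ i) _ (sha1_map G _ _ x hx)

theorem sha2_pi_zero (x : H2 G (∀ i, indSign G (K i) (ψ i)))
    (hx : x ∈ Sha2 G (∀ i, indSign G (K i) (ψ i))) : x = 0 := by
  refine piProjH2_inj G x (fun i => ?_)
  exact sha2_indSign_zero G (K i) (ψ i) _ (sha2_map G _ _ x hx)

end Assemble
theorem stmt_18 (G : Type) [Group G] [Finite G]
    (H : Subgroup G) (φ : H →* ℤˣ) (hφ : φ ≠ 1)
    (ι : Type) [Fintype ι] (K : ι → Subgroup G) (ψ : ∀ i, (K i) →* ℤˣ) :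
    Nonempty (H1 G (indSign G H φ) ≃+ ZMod 2) ∧
    (∀ x : Sha1 G (indSign G H φ), x = 0) ∧
    Nonempty (H1 G (∀ i, indSign G (K i) (ψ i)) ≃+ ({i : ι // ψ i ≠ 1} → ZMod 2)) ∧
    (∀ x : Sha1 G (∀ i, indSign G (K i) (ψ i)), x = 0) ∧
    (∀ x : Sha2 G (∀ i, indSign G (K i) (ψ i)), x = 0) := by
  obtain ⟨h0, h0neg⟩ := exists_neg G H φ hφ
  refine ⟨⟨h1IndSignEquiv G H φ h0 h0neg⟩, ?_, ⟨h1PiEquiv G K ψ⟩, ?_, ?_⟩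
  · intro x
    exact Subtype.ext (sha1_indSign_zero G H φ x.1 x.2)
  · intro x
    exact Subtype.ext (sha1_pi_zero G K ψ x.1 x.2)
  · intro x
    exact Subtype.ext (sha2_pi_zero G K ψ x.1 x.2)
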